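/- Let V be a finite-dimensional real inner product space, let Δ ⊆ V be a closed convex set with 0 ∈ Δ, and let ∇ := {x ∈ V | ⟨u, x⟩ ≥ −1 for all u ∈ Δ} be its polar. Then the closure of ⋃_{t ≥ 0} t•∇ equals the dual cone of the tail cone of Δ, i.e., closure(head(∇)) = {x ∈ V | ⟨y, x⟩ ≥ 0 for all y ∈ tail(Δ)}, where tail(Δ) := {y ∈ V | w + t•y ∈ Δ for all w ∈ Δ and all t ≥ 0}. -/

import Mathlib

open RealInnerProductSpace Pointwise

/-- **(4.2 headTail).** For a closed convex set `Δ ∋ 0` with polar `∇`, the closure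
of `head(∇) = ⋃_{t ≥ 0} t • ∇` equals the dual cone of `tail(Δ)`. -/
theorem closure_head_of_polar_eq_dual_of_tail
    {V : Type*} [NormedAddCommGroup V] [InnerProductSpace ℝ V]
    [FiniteDimensional ℝ V]
    (Δ : Set V) (hcl : IsClosed Δ) (hconv : Convex ℝ Δ) (h0 : (0 : V) ∈ Δ) :
    closure (⋃ t ∈ Set.Ici (0 : ℝ), t • {x : V | ∀ u ∈ Δ, ⟪u, x⟫ ≥ -1}) =
      {x : V | ∀ y ∈ {y : V | ∀ w ∈ Δ, ∀ t : ℝ, 0 ≤ t → w + t • y ∈ Δ},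
        ⟪y, x⟫ ≥ 0} := by
  set P : Set V := {x : V | ∀ u ∈ Δ, ⟪u, x⟫ ≥ -1} with hP
  set T : Set V := {y : V | ∀ w ∈ Δ, ∀ t : ℝ, 0 ≤ t → w + t • y ∈ Δ} with hTdef
  set H : Set V := ⋃ t ∈ Set.Ici (0 : ℝ), t • P with hH
  have h0P : (0 : V) ∈ P := fun u _ => by
    simp [inner_zero_right]
  have hPconv : Convex ℝ P := by
    intro x hx y hy a b ha hb hab
    intro u hu
    have h1 := hx u hu
    have h2 := hy u hu
    have : ⟪u, a • x + b • y⟫ = a * ⟪u, x⟫ + b * ⟪u, y⟫ := by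
      rw [inner_add_right, real_inner_smul_right, real_inner_smul_right]
    rw [ge_iff_le, this]
    nlinarith [mul_le_mul_of_nonneg_left h1 ha, mul_le_mul_of_nonneg_left h2 hb]
  have hmemH : ∀ x : V, x ∈ H ↔ ∃ t : ℝ, 0 ≤ t ∧ ∃ p ∈ P, t • p = x := by
    intro x
    simp only [hH, Set.mem_iUnion, Set.mem_Ici, exists_prop]
    constructor
    · rintro ⟨t, ht, hx⟩
      obtain ⟨p, hp, hpx⟩ := hx
      exact ⟨t, ht, p, hp, hpx⟩
    · rintro ⟨t, ht, p, hp, hpx⟩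
      exact ⟨t, ht, p, hp, hpx⟩
  -- H is a convex cone
  have hHsmul : ∀ c : ℝ, 0 < c → ∀ x ∈ H, c • x ∈ H := by
    intro c hc x hx
    obtain ⟨t, ht, p, hp, hpx⟩ := (hmemH x).1 hx
    exact (hmemH _).2 ⟨c * t, mul_nonneg hc.le ht, p, hp, by rw [← hpx, smul_smul]⟩
  have hHadd : ∀ x ∈ H, ∀ y ∈ H, x + y ∈ H := by
    intro x hx y hy
    obtain ⟨s, hs, p, hp, hpx⟩ := (hmemH x).1 hx
    obtain ⟨t, ht, q, hq, hqy⟩ := (hmemH y).1 hy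
    rcases eq_or_lt_of_le (add_nonneg hs ht) with hst | hst
    · have hs0 : s = 0 := by linarith [hs, ht]
      have ht0 : t = 0 := by linarith
      have : x + y = 0 := by
        rw [← hpx, ← hqy, hs0, ht0, zero_smul, zero_smul, add_zero]
      rw [this]
      exact (hmemH _).2 ⟨0, le_refl _, 0, h0P, by rw [zero_smul]⟩
    · have hst' : (0 : ℝ) < s + t := hst
      have ha : 0 ≤ s / (s + t) := div_nonneg hs hst'.le
      have hb : 0 ≤ t / (s + t) := div_nonneg ht hst'.le
      have hab : s / (s + t) + t / (s + t) = 1 := by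
        field_simp
      have hmid : (s / (s + t)) • p + (t / (s + t)) • q ∈ P := hPconv hp hq ha hb hab
      refine (hmemH _).2 ⟨s + t, hst'.le, _, hmid, ?_⟩
      rw [smul_add, smul_smul, smul_smul, ← hpx, ← hqy]
      congr 2 <;> field_simp
  let C : ConvexCone ℝ V :=
    { carrier := H
      smul_mem' := fun {c} hc {x} hx => hHsmul c hc x hx
      add_mem' := fun {x} hx {y} hy => hHadd x hx y hy }
  let K : ConvexCone ℝ V := C.closure
  have hKset : (K : Set V) = closure H := rfl
  have hKne : (K : Set V).Nonempty :=
    ⟨0, subset_closure ((hmemH 0).2 ⟨0, le_refl _, 0, h0P, by rw [zero_smul]⟩)⟩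
  have hKcl : IsClosed (K : Set V) := isClosed_closure
  -- dual of K equals dual of P
  have hdual : ProperCone.innerDual (K : Set V) = ProperCone.innerDual P := by
    apply le_antisymm
    · intro y hy x hx
      exact hy (subset_closure ((hmemH x).2 ⟨1, zero_le_one, x, hx, one_smul _ _⟩))
    · intro y hy x hx
      -- x ∈ closure H; show 0 ≤ ⟪x, y⟫
      have hcls : closure H ⊆ {z : V | 0 ≤ ⟪z, y⟫} := by
        apply closure_minimal
        · intro z hz
          obtain ⟨t, ht, p, hp, hpz⟩ := (hmemH z).1 hz
          have : ⟪z, y⟫ = t * ⟪p, y⟫ := by rw [← hpz, real_inner_smul_left]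
          rw [Set.mem_setOf_eq, this]
          exact mul_nonneg ht (hy hp)
        · have : {z : V | 0 ≤ ⟪z, y⟫} = (fun z => ⟪z, y⟫) ⁻¹' Set.Ici 0 := rfl
          rw [this]
          exact isClosed_Ici.preimage (continuous_id.inner continuous_const)
      exact hcls hx
  -- T equals the dual cone of P
  have hT : T = (ProperCone.innerDual P : Set V) := by
    ext y
    constructor
    · intro hy x hx
      -- 0 ≤ ⟪x, y⟫
      have hkey : ∀ t : ℝ, 0 ≤ t → t * ⟪y, x⟫ ≥ -1 := by
        intro t ht
        have hmem : t • y ∈ Δ := by simpa using hy 0 h0 t ht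
        have := hx (t • y) hmem
        rwa [real_inner_smul_left] at this
      by_contra hneg
      push_neg at hneg
      change ⟪x, y⟫ < 0 at hneg
      rw [real_inner_comm] at hneg
      have hx2 : (0:ℝ) < -⟪y, x⟫ := by linarith
      have := hkey (2 / (-⟪y, x⟫)) (by positivity)
      rw [ge_iff_le, div_mul_eq_mul_div, le_div_iff₀ hx2] at this
      nlinarith
    · intro hy w hw t ht
      by_contra hz
      obtain ⟨f, u, ha, hb⟩ := geometric_hahn_banach_closed_point hconv hcl hz
      have hu : (0 : ℝ) < u := by
        have := ha 0 h0
        rwa [map_zero] at this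
      set v : V := (InnerProductSpace.toDual ℝ V).symm f with hv
      have hvf : ∀ x : V, ⟪v, x⟫ = f x := fun x => InnerProductSpace.toDual_symm_apply
      set x : V := (-u⁻¹) • v with hx
      have hxP : x ∈ P := by
        intro a haΔ
        have hfa : f a < u := ha a haΔ
        have : ⟪a, x⟫ = -u⁻¹ * f a := by
          rw [hx, real_inner_smul_right, real_inner_comm, hvf]
        rw [ge_iff_le, this]
        rw [neg_mul, le_neg, neg_neg]
        rw [inv_mul_le_iff₀ hu] -- u⁻¹ * f a ≤ 1 ↔ f a ≤ 1 * u
        linarith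
      have h0x : 0 ≤ ⟪x, y⟫ := hy hxP
      have hfy : f y ≤ 0 := by
        have : ⟪x, y⟫ = -u⁻¹ * f y := by
          rw [hx, real_inner_smul_left, hvf]
        rw [this] at h0x
        nlinarith [inv_pos.2 hu]
      have hfz : f (w + t • y) = f w + t * f y := by
        rw [map_add, map_smul]; rfl
      have hfw : f w < u := ha w hw
      nlinarith [mul_nonpos_of_nonneg_of_nonpos ht hfy]
  -- bipolar
  let KP : ProperCone ℝ V :=
    { toSubmodule := K.toPointedCone (show (0 : V) ∈ (K : Set V) from
        subset_closure ((hmemH 0).2 ⟨0, le_refl _, 0, h0P, by rw [zero_smul]⟩))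
      isClosed' := hKcl }
  have hbip := ProperCone.innerDual_innerDual KP
  have hbipset : (ProperCone.innerDual (ProperCone.innerDual (K : Set V) : Set V) : Set V) = (K : Set V) :=
    congrArg _ hbip
  rw [hdual] at hbipset
  -- conclude
  have hgoal : {x : V | ∀ y ∈ T, ⟪y, x⟫ ≥ 0} = (ProperCone.innerDual (ProperCone.innerDual P : Set V) : Set V) := by
    rw [hT]
    ext x
    exact Iff.rfl
  calc closure H = (K : Set V) := hKset.symm
    _ = (ProperCone.innerDual (ProperCone.innerDual P : Set V) : Set V) := hbipset.symm
    _ = {x : V | ∀ y ∈ T, ⟪y, x⟫ ≥ 0} := hgoal.symm
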